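/- Let μ be a probability measure on Γ. Then for every n ∈ ℕ and every γ ∈ Γ, μ_n(γ) = ∫_{[−1/2,1/2]^m} (ℒ_v^n 1_{x_γ})(id) · e^{−2πi·⟨v, Φ(γ)⟩} dv, where the integral is with respect to Lebesgue measure on the cube [−1/2,1/2]^m ⊂ ℝ^m and x_γ ∈ Δ denotes the representative of the coset Λγ. -/

import Mathlib

open scoped BigOperators Classical
open Filter Matrix MeasureTheory

namespace NSVA

noncomputable section

/-- Convolution of two real-valued functions on a group. -/
def conv {G : Type*} [Group G] (μ ν : G → ℝ) : G → ℝ :=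
  fun g => ∑' h : G, μ h * ν (h⁻¹ * g)

/-- Convolution powers: `convPow μ 0 = δ_1`, `convPow μ (n+1) = (convPow μ n) * μ`. -/
def convPow {G : Type*} [Group G] (μ : G → ℝ) : ℕ → G → ℝ
  | 0 => fun g => if g = 1 then 1 else 0
  | n + 1 => conv (convPow μ n) μ

/-- A probability measure on a countable set, viewed as a function. -/
def IsProb {G : Type*} (μ : G → ℝ) : Prop := (∀ g, 0 ≤ μ g) ∧ HasSum μ 1

/-- The support of `μ` generates the group as a semigroup. -/
def Nondeg {G : Type*} [Group G] (μ : G → ℝ) : Prop :=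
  ∀ g : G, g ∈ Subsemigroup.closure {x : G | 0 < μ x}

/-- `μ` is aperiodic: `μ_n(1) > 0` for all large enough `n`. -/
def Aperiodic {G : Type*} [Group G] (μ : G → ℝ) : Prop :=
  ∃ N : ℕ, ∀ n : ℕ, N ≤ n → 0 < convPow μ n 1

/-- Total variation distance between two (probability) functions. -/
def tv {Z : Type*} (p q : Z → ℝ) : ℝ := (1 / 2) * ∑' z : Z, |p z - q z|

/-- Word length with respect to a finite set `S₀`. -/
def wordLength {G : Type*} [Group G] (S₀ : Finset G) (g : G) : ℕ :=
  sInf {n : ℕ | ∃ l : List G, (∀ s ∈ l, s ∈ S₀) ∧ l.length = n ∧ l.prod = g}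

/-- Finite second moment with respect to a word metric given by a finite symmetric
generating set. -/
def FinSecondMoment {G : Type*} [Group G] (μ : G → ℝ) : Prop :=
  ∃ S₀ : Finset G, (∀ s ∈ S₀, s⁻¹ ∈ S₀) ∧ Subgroup.closure (S₀ : Set G) = ⊤ ∧
    Summable (fun g : G => (wordLength S₀ g : ℝ) ^ 2 * μ g)

/-- A group is virtually abelian if it has an abelian subgroup of finite index. -/
def VirtAbelian (G : Type*) [Group G] : Prop :=
  ∃ A : Subgroup G, A.index ≠ 0 ∧ ∀ a b : A, a * b = b * a

/-- The noised measure `π^ρ` on `G × G`. -/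
def noised {G : Type*} (μ : G → ℝ) (ρ : ℝ) : G × G → ℝ :=
  fun p => ρ * μ p.1 * μ p.2 + (1 - ρ) * μ p.1 * (if p.1 = p.2 then 1 else 0)

/-- First marginal of a measure on a product. -/
def marg1 {G₁ G₂ : Type*} (ν : G₁ × G₂ → ℝ) : G₁ → ℝ := fun γ₁ => ∑' γ₂ : G₂, ν (γ₁, γ₂)

/-- Second marginal of a measure on a product. -/
def marg2 {G₁ G₂ : Type*} (ν : G₁ × G₂ → ℝ) : G₂ → ℝ := fun γ₂ => ∑' γ₁ : G₁, ν (γ₁, γ₂)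

/-- A system of representatives of the right cosets `Λ\Γ` containing the identity,
together with the representative map `rep`, constant on right cosets. -/
structure RepSystem {Γ : Type*} [Group Γ] (Λ : Subgroup Γ) where
  Δ : Finset Γ
  one_mem : (1 : Γ) ∈ Δ
  rep : Γ → Γ
  rep_mem : ∀ γ : Γ, rep γ ∈ Δ
  rep_spec : ∀ γ : Γ, γ * (rep γ)⁻¹ ∈ Λ
  rep_idem : ∀ x ∈ Δ, rep x = x
  rep_coset : ∀ γ : Γ, ∀ v ∈ Λ, rep (v * γ) = rep γ

variable {Γ : Type*} [Group Γ] {Λ : Subgroup Γ} {m : ℕ}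

/-- The cocycle `α(x,s) = ψ(x·s·(x^s)⁻¹) ∈ ℤ^m`. -/
def cocycle (ψ : Λ ≃* Multiplicative (Fin m → ℤ)) (R : RepSystem Λ) (x s : Γ) : Fin m → ℤ :=
  Multiplicative.toAdd (ψ ⟨x * s * (R.rep (x * s))⁻¹, R.rep_spec (x * s)⟩)

/-- The transfer homomorphism `θ(γ) = ∑_{x∈Δ} α(x,γ)`. -/
def transfer (ψ : Λ ≃* Multiplicative (Fin m → ℤ)) (R : RepSystem Λ) (γ : Γ) : Fin m → ℤ :=
  ∑ x ∈ R.Δ, cocycle ψ R x γ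

/-- `Φ(γ) = ψ(v)` where `γ = v·x`, `v ∈ Λ`, `x ∈ Δ`. -/
def Phi (ψ : Λ ≃* Multiplicative (Fin m → ℤ)) (R : RepSystem Λ) (γ : Γ) : Fin m → ℤ :=
  Multiplicative.toAdd (ψ ⟨γ * (R.rep γ)⁻¹, R.rep_spec γ⟩)

/-- A 1-form on the quotient diagram. -/
def IsOneForm (R : RepSystem Λ) (ω : Γ → Γ → ℝ) : Prop :=
  ∀ x ∈ R.Δ, ∀ s : Γ, ω (R.rep (x * s)) s⁻¹ = -ω x s

/-- `χ(ω) = ∑_{x∈Δ} ∑_s c(x,s)·ω(x,s)` where `c(x,s) = μ(s)/#F`. -/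
def chi (R : RepSystem Λ) (μ : Γ → ℝ) (ω : Γ → Γ → ℝ) : ℝ :=
  ∑ x ∈ R.Δ, ∑' s : Γ, μ s / (Λ.index : ℝ) * ω x s

/-- Square-integrability of a 1-form. -/
def SqInt (R : RepSystem Λ) (μ : Γ → ℝ) (ω : Γ → Γ → ℝ) : Prop :=
  ∀ x ∈ R.Δ, Summable (fun s : Γ => μ s / (Λ.index : ℝ) * ω x s ^ 2)

/-- Harmonicity of a (square-integrable) 1-form. -/
def Harmonic (R : RepSystem Λ) (μ : Γ → ℝ) (ω : Γ → Γ → ℝ) : Prop :=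
  SqInt R μ ω ∧ ∀ x ∈ R.Δ, (∑' s : Γ, μ s * ω x s) = chi R μ ω

/-- The differential `df(x,s) = f(x^s) − f(x)`. -/
def dd (R : RepSystem Λ) (f : Γ → ℝ) : Γ → Γ → ℝ := fun x s => f (R.rep (x * s)) - f x

/-- `(u, f)` is a harmonic decomposition of the 1-form `ω`: `ω = u + df` with `u`
a harmonic 1-form. -/
def IsHarmDecomp (R : RepSystem Λ) (μ : Γ → ℝ) (ω u : Γ → Γ → ℝ) (f : Γ → ℝ) : Prop :=
  IsOneForm R u ∧ Harmonic R μ u ∧ ∀ x ∈ R.Δ, ∀ s : Γ, ω x s = u x s + dd R f x s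

/-- The 1-form `v̂(x,s) = ⟨v, α(x,s)⟩` (standard inner product). -/
def vhat (ψ : Λ ≃* Multiplicative (Fin m → ℤ)) (R : RepSystem Λ) (v : Fin m → ℝ) :
    Γ → Γ → ℝ :=
  fun x s => ∑ i, v i * (cocycle ψ R x s i : ℝ)

/-- The 1-form `v̂(x,s) = B(v, α(x,s))` for a bilinear form `B`. -/
def vhatB (ψ : Λ ≃* Multiplicative (Fin m → ℤ)) (R : RepSystem Λ)
    (B : (Fin m → ℝ) →ₗ[ℝ] (Fin m → ℝ) →ₗ[ℝ] ℝ) (v : Fin m → ℝ) : Γ → Γ → ℝ :=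
  fun x s => B v (fun i => (cocycle ψ R x s i : ℝ))

/-- The drift `ζ = (1/#F)·∑_{x∈Δ}∑_s μ(s)·α(x,s) ∈ ℝ^m`. -/
def drift (ψ : Λ ≃* Multiplicative (Fin m → ℤ)) (R : RepSystem Λ) (μ : Γ → ℝ) : Fin m → ℝ :=
  fun i => (Λ.index : ℝ)⁻¹ * ∑ x ∈ R.Δ, ∑' s : Γ, μ s * (cocycle ψ R x s i : ℝ)

/-- The covariance pairing `∑_{x,s} c(x,s)·u(x,s)·u'(x,s) − χ(u)·χ(u')`. -/
def cov (R : RepSystem Λ) (μ : Γ → ℝ) (u u' : Γ → Γ → ℝ) : ℝ :=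
  (∑ x ∈ R.Δ, ∑' s : Γ, μ s / (Λ.index : ℝ) * (u x s * u' x s)) - chi R μ u * chi R μ u'

/-- The transfer operator `ℒ_v` acting on functions `Δ → ℂ`. -/
def transferOp (ψ : Λ ≃* Multiplicative (Fin m → ℤ)) (R : RepSystem Λ) (μ : Γ → ℝ)
    (v : Fin m → ℝ) (f : Γ → ℂ) : Γ → ℂ :=
  fun x => ∑' s : Γ, (μ s : ℂ) *
    Complex.exp (2 * Real.pi * Complex.I * ((∑ i, v i * (cocycle ψ R x s i : ℝ)) : ℝ)) *
    f (R.rep (x * s))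

/-- The Gaussian density `ξ_A(w)` associated with a (positive-definite) matrix `A`. -/
def gauss {d : ℕ} (A : Matrix (Fin d) (Fin d) ℝ) (w : Fin d → ℝ) : ℝ :=
  (2 * Real.pi) ^ (-(d : ℝ) / 2) * A.det ^ (-(1 : ℝ) / 2) *
    Real.exp (-(w ⬝ᵥ A⁻¹.mulVec w) / 2)

/-- The product representative system for `Λ₁ × Λ₂ ≤ Γ₁ × Γ₂`. -/
def prodRep {Γ₁ : Type*} [Group Γ₁] {Γ₂ : Type*} [Group Γ₂]
    {Λ₁ : Subgroup Γ₁} {Λ₂ : Subgroup Γ₂}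
    (R₁ : RepSystem Λ₁) (R₂ : RepSystem Λ₂) : RepSystem (Λ₁.prod Λ₂) where
  Δ := R₁.Δ ×ˢ R₂.Δ
  one_mem := Finset.mem_product.mpr ⟨R₁.one_mem, R₂.one_mem⟩
  rep := fun p => (R₁.rep p.1, R₂.rep p.2)
  rep_mem := fun p => Finset.mem_product.mpr ⟨R₁.rep_mem p.1, R₂.rep_mem p.2⟩
  rep_spec := fun p => Subgroup.mem_prod.mpr ⟨R₁.rep_spec p.1, R₂.rep_spec p.2⟩
  rep_idem := fun x hx => by
    rcases Finset.mem_product.mp hx with ⟨h1, h2⟩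
    exact Prod.ext_iff.mpr ⟨R₁.rep_idem x.1 h1, R₂.rep_idem x.2 h2⟩
  rep_coset := fun p v hv => by
    rcases Subgroup.mem_prod.mp hv with ⟨h1, h2⟩
    exact Prod.ext_iff.mpr ⟨R₁.rep_coset p.1 v.1 h1, R₂.rep_coset p.2 v.2 h2⟩

/-- The 1-form `𝐯̂(x,s) = ⟨𝐯, α(x,s)⟩` on a product, standard inner product. -/
def vhat2 {Γ₁ : Type*} [Group Γ₁] {Γ₂ : Type*} [Group Γ₂]
    {Λ₁ : Subgroup Γ₁} {Λ₂ : Subgroup Γ₂} {m₁ m₂ : ℕ}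
    (ψ₁ : Λ₁ ≃* Multiplicative (Fin m₁ → ℤ)) (R₁ : RepSystem Λ₁)
    (ψ₂ : Λ₂ ≃* Multiplicative (Fin m₂ → ℤ)) (R₂ : RepSystem Λ₂)
    (v : (Fin m₁ → ℝ) × (Fin m₂ → ℝ)) : (Γ₁ × Γ₂) → (Γ₁ × Γ₂) → ℝ :=
  fun x s => (∑ i, v.1 i * (cocycle ψ₁ R₁ x.1 s.1 i : ℝ)) +
    ∑ i, v.2 i * (cocycle ψ₂ R₂ x.2 s.2 i : ℝ)

/-- The 1-form `𝐯̂(x,s) = ⟨𝐯, α(x,s)⟩` on a product, orthogonal-sum of the two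
bilinear forms `B₁`, `B₂`. -/
def vhatB2 {Γ₁ : Type*} [Group Γ₁] {Γ₂ : Type*} [Group Γ₂]
    {Λ₁ : Subgroup Γ₁} {Λ₂ : Subgroup Γ₂} {m₁ m₂ : ℕ}
    (ψ₁ : Λ₁ ≃* Multiplicative (Fin m₁ → ℤ)) (R₁ : RepSystem Λ₁)
    (B₁ : (Fin m₁ → ℝ) →ₗ[ℝ] (Fin m₁ → ℝ) →ₗ[ℝ] ℝ)
    (ψ₂ : Λ₂ ≃* Multiplicative (Fin m₂ → ℤ)) (R₂ : RepSystem Λ₂)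
    (B₂ : (Fin m₂ → ℝ) →ₗ[ℝ] (Fin m₂ → ℝ) →ₗ[ℝ] ℝ)
    (v : (Fin m₁ → ℝ) × (Fin m₂ → ℝ)) : (Γ₁ × Γ₂) → (Γ₁ × Γ₂) → ℝ :=
  fun x s => B₁ v.1 (fun i => (cocycle ψ₁ R₁ x.1 s.1 i : ℝ)) +
    B₂ v.2 (fun i => (cocycle ψ₂ R₂ x.2 s.2 i : ℝ))

end


section FourierInversionAux

section ProbAux

variable {G : Type*} [Group G]

omit [Group G] in
lemma prob_le_one {μ : G → ℝ} (h : IsProb μ) (g : G) : μ g ≤ 1 :=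
  le_hasSum h.2 g fun i _ => h.1 i

lemma conv_summand_summable {p q : G → ℝ} (hp : IsProb p) (hq : IsProb q) (g : G) :
    Summable fun h => p h * q (h⁻¹ * g) := by
  refine Summable.of_nonneg_of_le (fun h => mul_nonneg (hp.1 h) (hq.1 _)) (fun h => ?_)
    hp.2.summable
  calc p h * q (h⁻¹ * g) ≤ p h * 1 := mul_le_mul_of_nonneg_left (prob_le_one hq _) (hp.1 h)
    _ = p h := mul_one _

lemma isProb_conv {p q : G → ℝ} (hp : IsProb p) (hq : IsProb q) : IsProb (conv p q) := by
  constructor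
  · intro g; exact tsum_nonneg fun h => mul_nonneg (hp.1 h) (hq.1 _)
  · have hsum : Summable fun x : G × G => p x.1 * q x.2 :=
      hp.2.summable.mul_of_nonneg hq.2.summable hp.1 hq.1
    have hF : HasSum (fun x : G × G => p x.1 * q x.2) 1 := by
      have := HasSum.mul_eq hp.2 hq.2 hsum.hasSum
      rw [one_mul] at this
      rw [this]; exact hsum.hasSum
    have hF' : HasSum (fun x : G × G => p x.1 * q (x.1⁻¹ * x.2)) 1 := by
      let e : G × G ≃ G × G := Equiv.prodShear (Equiv.refl G) fun h => Equiv.mulLeft h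
      rw [← Equiv.hasSum_iff e]
      convert hF using 1
      funext x
      simp [e, Equiv.prodShear, Equiv.mulLeft]
    have hswap : HasSum (fun x : G × G => p x.2 * q (x.2⁻¹ * x.1)) 1 := by
      rw [← (Equiv.prodComm G G).hasSum_iff]
      convert hF' using 1
      rfl
    exact hswap.prod_fiberwise fun g => (conv_summand_summable hp hq g).hasSum

lemma isProb_convPow {μ : G → ℝ} (h : IsProb μ) : ∀ n, IsProb (convPow μ n)
  | 0 => ⟨fun g => by by_cases hg : g = 1 <;> simp [convPow, hg],
      by simpa [convPow] using hasSum_ite_eq (1 : G) (1 : ℝ)⟩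
  | n + 1 => isProb_conv (isProb_convPow h n) h

end ProbAux

variable {Γ : Type*} [Group Γ] {Λ : Subgroup Γ} {m : ℕ}

lemma rep_mul_rep (R : RepSystem Λ) (x s t : Γ) :
    R.rep (x * s * t) = R.rep (R.rep (x * s) * t) := by
  have h : x * s * t = (x * s * (R.rep (x * s))⁻¹) * (R.rep (x * s) * t) := by group
  rw [h, R.rep_coset _ _ (R.rep_spec (x * s))]

lemma cocycle_mul (ψ : Λ ≃* Multiplicative (Fin m → ℤ)) (R : RepSystem Λ) (x s t : Γ) :
    cocycle ψ R x (s * t) = cocycle ψ R x s + cocycle ψ R (R.rep (x * s)) t := by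
  have hrep : R.rep (x * (s * t)) = R.rep (R.rep (x * s) * t) := by
    rw [← mul_assoc]; exact rep_mul_rep R x s t
  unfold cocycle
  rw [← toAdd_mul, ← _root_.map_mul]
  congr 1
  congr 1
  apply Subtype.ext
  show x * (s * t) * (R.rep (x * (s * t)))⁻¹ =
    (x * s * (R.rep (x * s))⁻¹) * (R.rep (x * s) * t * (R.rep (R.rep (x * s) * t))⁻¹)
  rw [hrep]
  group

lemma cocycle_one (ψ : Λ ≃* Multiplicative (Fin m → ℤ)) (R : RepSystem Λ) (x : Γ)
    (hx : R.rep x = x) : cocycle ψ R x 1 = 0 := by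
  unfold cocycle
  have h1 : (⟨x * 1 * (R.rep (x * 1))⁻¹, R.rep_spec (x * 1)⟩ : Λ) = 1 := by
    apply Subtype.ext; simp [hx]
  rw [h1, _root_.map_one]
  rfl

lemma cocycle_one_left (ψ : Λ ≃* Multiplicative (Fin m → ℤ)) (R : RepSystem Λ) (s : Γ) :
    cocycle ψ R 1 s = Phi ψ R s := by
  unfold cocycle Phi
  have h1 : (⟨1 * s * (R.rep (1 * s))⁻¹, R.rep_spec (1 * s)⟩ : Λ) =
      ⟨s * (R.rep s)⁻¹, R.rep_spec s⟩ := Subtype.ext (by simp)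
  rw [h1]

lemma eq_of_phi_rep (ψ : Λ ≃* Multiplicative (Fin m → ℤ)) (R : RepSystem Λ) {s γ : Γ}
    (hΦ : Phi ψ R s = Phi ψ R γ) (hrep : R.rep s = R.rep γ) : s = γ := by
  have h1 : (⟨s * (R.rep s)⁻¹, R.rep_spec s⟩ : Λ) = ⟨γ * (R.rep γ)⁻¹, R.rep_spec γ⟩ :=
    ψ.injective (Multiplicative.toAdd.injective hΦ)
  have h2 : s * (R.rep s)⁻¹ = γ * (R.rep γ)⁻¹ := congrArg Subtype.val h1
  calc s = (s * (R.rep s)⁻¹) * R.rep s := by group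
    _ = (γ * (R.rep γ)⁻¹) * R.rep γ := by rw [h2, hrep]
    _ = γ := by group

omit [Group Γ] in
lemma norm_exp_two_pi_I (r : ℝ) : ‖Complex.exp (2 * Real.pi * Complex.I * (r : ℂ))‖ = 1 := by
  rw [Complex.norm_exp]
  have h : (2 * (Real.pi : ℂ) * Complex.I * (r : ℂ)).re = 0 := by
    simp [Complex.mul_re, Complex.mul_im]
  rw [h, Real.exp_zero]

omit [Group Γ] in
lemma term_norm_le {μ : Γ → ℝ} (hμ0 : ∀ g, 0 ≤ μ g) {f : Γ → ℂ} (hf : ∀ y, ‖f y‖ ≤ 1)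
    (r : ℝ) (s y : Γ) :
    ‖(μ s : ℂ) * Complex.exp (2 * Real.pi * Complex.I * (r : ℂ)) * f y‖ ≤ μ s := by
  rw [norm_mul, norm_mul, Complex.norm_real, norm_exp_two_pi_I, mul_one, Real.norm_eq_abs,
    abs_of_nonneg (hμ0 s)]
  calc μ s * ‖f y‖ ≤ μ s * 1 := mul_le_mul_of_nonneg_left (hf y) (hμ0 s)
    _ = μ s := mul_one _

lemma transferOp_term_summable {μ : Γ → ℝ} (hμ : IsProb μ) (ψ : Λ ≃* Multiplicative (Fin m → ℤ))
    (R : RepSystem Λ) (v : Fin m → ℝ) {f : Γ → ℂ} (hf : ∀ y, ‖f y‖ ≤ 1) (x : Γ) :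
    Summable fun s : Γ => (μ s : ℂ) *
      Complex.exp (2 * Real.pi * Complex.I * ((∑ i, v i * (cocycle ψ R x s i : ℝ)) : ℝ)) *
      f (R.rep (x * s)) :=
  Summable.of_norm_bounded hμ.2.summable fun s => term_norm_le hμ.1 hf _ s _

lemma transferOp_norm_le {μ : Γ → ℝ} (hμ : IsProb μ) (ψ : Λ ≃* Multiplicative (Fin m → ℤ))
    (R : RepSystem Λ) (v : Fin m → ℝ) {f : Γ → ℂ} (hf : ∀ y, ‖f y‖ ≤ 1) (y : Γ) :
    ‖transferOp ψ R μ v f y‖ ≤ 1 := by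
  have hs := transferOp_term_summable hμ ψ R v hf y
  calc ‖transferOp ψ R μ v f y‖ ≤ ∑' s : Γ, ‖(μ s : ℂ) *
        Complex.exp (2 * Real.pi * Complex.I * ((∑ i, v i * (cocycle ψ R y s i : ℝ)) : ℝ)) *
        f (R.rep (y * s))‖ := norm_tsum_le_tsum_norm hs.norm
    _ ≤ ∑' s : Γ, μ s := Summable.tsum_le_tsum (fun s => term_norm_le hμ.1 hf _ s _) hs.norm hμ.2.summable
    _ = 1 := hμ.2.tsum_eq

lemma exp_cocycle_mul (ψ : Λ ≃* Multiplicative (Fin m → ℤ)) (R : RepSystem Λ)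
    (v : Fin m → ℝ) (x s t : Γ) :
    Complex.exp (2 * Real.pi * Complex.I * ((∑ i, v i * (cocycle ψ R x (s * t) i : ℝ)) : ℝ)) =
      Complex.exp (2 * Real.pi * Complex.I * ((∑ i, v i * (cocycle ψ R x s i : ℝ)) : ℝ)) *
      Complex.exp (2 * Real.pi * Complex.I *
        ((∑ i, v i * (cocycle ψ R (R.rep (x * s)) t i : ℝ)) : ℝ)) := by
  rw [← Complex.exp_add]
  congr 1
  rw [cocycle_mul ψ R x s t]
  simp only [Pi.add_apply, Int.cast_add, mul_add, Finset.sum_add_distrib, Complex.ofReal_add]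
  try ring

lemma transferOp_iter (ψ : Λ ≃* Multiplicative (Fin m → ℤ)) (R : RepSystem Λ)
    {μ : Γ → ℝ} (hμ : IsProb μ) (v : Fin m → ℝ) (n : ℕ) :
    ∀ (f : Γ → ℂ), (∀ y, ‖f y‖ ≤ 1) → ∀ x : Γ, R.rep x = x →
      (transferOp ψ R μ v)^[n] f x =
        ∑' s : Γ, (convPow μ n s : ℂ) *
          Complex.exp (2 * Real.pi * Complex.I * ((∑ i, v i * (cocycle ψ R x s i : ℝ)) : ℝ)) *
          f (R.rep (x * s)) := by
  induction n with
  | zero =>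
    intro f hf x hx
    rw [Function.iterate_zero_apply, tsum_eq_single 1 (by intro s hs; simp [convPow, hs])]
    have h0 : cocycle ψ R x 1 = 0 := cocycle_one ψ R x hx
    simp [convPow, h0, hx]
  | succ n IH =>
    intro f hf x hx
    have hμn : IsProb (convPow μ n) := isProb_convPow hμ n
    rw [Function.iterate_succ_apply]
    have hL : ∀ y, ‖transferOp ψ R μ v f y‖ ≤ 1 := transferOp_norm_le hμ ψ R v hf
    rw [IH (transferOp ψ R μ v f) hL x hx]
    set G : Γ × Γ → ℂ := fun p => (convPow μ n p.1 : ℂ) * (μ p.2 : ℂ) *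
      Complex.exp (2 * Real.pi * Complex.I *
        ((∑ i, v i * (cocycle ψ R x (p.1 * p.2) i : ℝ)) : ℝ)) *
      f (R.rep (x * (p.1 * p.2))) with hGdef
    have hprod : Summable fun p : Γ × Γ => convPow μ n p.1 * μ p.2 :=
      hμn.2.summable.mul_of_nonneg hμ.2.summable hμn.1 hμ.1
    have hGnorm : ∀ p : Γ × Γ, ‖G p‖ ≤ convPow μ n p.1 * μ p.2 := by
      intro p
      have h : G p = (convPow μ n p.1 : ℂ) * ((μ p.2 : ℂ) *
          Complex.exp (2 * Real.pi * Complex.I *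
            ((∑ i, v i * (cocycle ψ R x (p.1 * p.2) i : ℝ)) : ℝ)) *
          f (R.rep (x * (p.1 * p.2)))) := by rw [hGdef]; ring
      rw [h, norm_mul, Complex.norm_real, Real.norm_eq_abs, abs_of_nonneg (hμn.1 p.1)]
      exact mul_le_mul_of_nonneg_left (term_norm_le hμ.1 hf _ p.2 _) (hμn.1 p.1)
    have hG : Summable G := Summable.of_norm_bounded hprod hGnorm
    have step1 : (∑' s : Γ, (convPow μ n s : ℂ) *
        Complex.exp (2 * Real.pi * Complex.I *
          ((∑ i, v i * (cocycle ψ R x s i : ℝ)) : ℝ)) *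
        transferOp ψ R μ v f (R.rep (x * s))) = ∑' s : Γ, ∑' t : Γ, G (s, t) := by
      refine tsum_congr fun s => ?_
      have hrw : transferOp ψ R μ v f (R.rep (x * s)) =
          ∑' t : Γ, (μ t : ℂ) * Complex.exp (2 * Real.pi * Complex.I *
            ((∑ i, v i * (cocycle ψ R (R.rep (x * s)) t i : ℝ)) : ℝ)) *
            f (R.rep (R.rep (x * s) * t)) := rfl
      rw [hrw, ← tsum_mul_left]
      refine tsum_congr fun t => ?_
      have h1 : R.rep (x * (s * t)) = R.rep (R.rep (x * s) * t) := by
        rw [← mul_assoc]; exact rep_mul_rep R x s t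
      rw [hGdef]
      simp only
      rw [exp_cocycle_mul ψ R v x s t, h1]
      ring
    rw [step1, ← Summable.tsum_prod hG]
    set e : Γ × Γ ≃ Γ × Γ := Equiv.prodShear (Equiv.refl Γ) (fun s => (Equiv.mulLeft s).symm)
      with hedef
    set H : Γ × Γ → ℂ := fun q => (convPow μ n q.1 : ℂ) * (μ (q.1⁻¹ * q.2) : ℂ) *
      Complex.exp (2 * Real.pi * Complex.I *
        ((∑ i, v i * (cocycle ψ R x q.2 i : ℝ)) : ℝ)) *
      f (R.rep (x * q.2)) with hHdef
    have hGe : ∀ q : Γ × Γ, G (e q) = H q := by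
      rintro ⟨s, g⟩
      simp only [hedef, hGdef, hHdef, Equiv.prodShear, Equiv.coe_fn_mk, Equiv.refl_apply,
        Equiv.mulLeft_symm, Equiv.coe_mulLeft, mul_inv_cancel_left]
    have hH : Summable H := by
      have h : Summable (G ∘ e) := (e.summable_iff (f := G)).mpr hG
      exact h.congr hGe
    rw [← Equiv.tsum_eq e G, tsum_congr hGe]
    have hswap : ∑' q : Γ × Γ, H q = ∑' g : Γ, ∑' s : Γ, H (s, g) := by
      rw [← Equiv.tsum_eq (Equiv.prodComm Γ Γ) H]
      have hHs : Summable (H ∘ Equiv.prodComm Γ Γ) :=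
        ((Equiv.prodComm Γ Γ).summable_iff (f := H)).mpr hH
      exact Summable.tsum_prod hHs
    rw [hswap]
    refine tsum_congr fun g => ?_
    have hpt : ∀ s : Γ, H (s, g) = ((convPow μ n s * μ (s⁻¹ * g) : ℝ) : ℂ) *
        (Complex.exp (2 * Real.pi * Complex.I *
          ((∑ i, v i * (cocycle ψ R x g i : ℝ)) : ℝ)) * f (R.rep (x * g))) := by
      intro s
      rw [hHdef]
      push_cast
      ring
    rw [tsum_congr hpt, tsum_mul_right, ← Complex.ofReal_tsum]
    have h2 : (∑' s : Γ, convPow μ n s * μ (s⁻¹ * g)) = convPow μ (n + 1) g := rfl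
    rw [h2]
    ring

lemma integral_exp_int (k : ℤ) :
    (∫ x in Set.Icc (-(1/2) : ℝ) (1/2),
      Complex.exp (2 * Real.pi * Complex.I * ((x * (k : ℝ) : ℝ) : ℂ)))
      = if k = 0 then 1 else 0 := by
  by_cases hk : k = 0
  · simp only [hk, Int.cast_zero, mul_zero, Complex.ofReal_zero, Complex.exp_zero, if_true]
    rw [setIntegral_const]
    rw [Real.volume_real_Icc]
    norm_num
  · rw [if_neg hk]
    have hc : (2 * Real.pi * Complex.I * (k : ℂ)) ≠ 0 := by
      simp [Real.pi_ne_zero, Complex.I_ne_zero, hk]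
    have hrw : ∀ x : ℝ, (2 * Real.pi * Complex.I * ((x * (k : ℝ) : ℝ) : ℂ)) =
        (2 * Real.pi * Complex.I * (k : ℂ)) * (x : ℂ) := by
      intro x; push_cast; ring
    simp_rw [hrw]
    rw [MeasureTheory.integral_Icc_eq_integral_Ioc,
      ← intervalIntegral.integral_of_le (by norm_num : (-(1/2) : ℝ) ≤ 1/2),
      integral_exp_mul_complex hc]
    have hexp : Complex.exp (2 * Real.pi * Complex.I * (k : ℂ) * ((1/2 : ℝ) : ℂ)) =
        Complex.exp (2 * Real.pi * Complex.I * (k : ℂ) * ((-(1/2) : ℝ) : ℂ)) := by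
      rw [Complex.exp_eq_exp_iff_exists_int]
      exact ⟨k, by push_cast; ring⟩
    rw [hexp, sub_self, zero_div]

lemma indicator_pi_prod {ι : Type*} [Fintype ι] (S : ι → Set ℝ) (f : ι → ℝ → ℂ) (v : ι → ℝ) :
    Set.indicator (Set.univ.pi S) (fun w => ∏ i, f i (w i)) v =
      ∏ i, Set.indicator (S i) (f i) (v i) := by
  by_cases hv : v ∈ Set.univ.pi S
  · rw [Set.indicator_of_mem hv]
    refine Finset.prod_congr rfl fun i _ => ?_
    rw [Set.indicator_of_mem (hv i (Set.mem_univ i))]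
  · rw [Set.indicator_of_notMem hv]
    obtain ⟨i, hi⟩ : ∃ i, v i ∉ S i := by
      by_contra h; push_neg at h; exact hv fun i _ => h i
    exact (Finset.prod_eq_zero (Finset.mem_univ i) (by rw [Set.indicator_of_notMem hi])).symm

lemma integral_cube {d : ℕ} (k : Fin d → ℤ) :
    (∫ v in Set.univ.pi (fun _ : Fin d => Set.Icc (-(1/2) : ℝ) (1/2)),
      Complex.exp (2 * Real.pi * Complex.I * ((∑ i, v i * (k i : ℝ)) : ℝ)))
      = if k = 0 then 1 else 0 := by
  have h1 : ∀ v : Fin d → ℝ, Complex.exp (2 * Real.pi * Complex.I *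
      ((∑ i, v i * (k i : ℝ)) : ℝ)) =
      ∏ i, Complex.exp (2 * Real.pi * Complex.I * ((v i * (k i : ℝ) : ℝ) : ℂ)) := by
    intro v
    rw [← Complex.exp_sum]
    congr 1
    push_cast
    rw [Finset.mul_sum]
  simp_rw [h1]
  rw [← MeasureTheory.integral_indicator (MeasurableSet.univ_pi fun _ => measurableSet_Icc)]
  have h2 : Set.indicator (Set.univ.pi fun _ : Fin d => Set.Icc (-(1/2) : ℝ) (1/2))
      (fun w : Fin d → ℝ =>
        ∏ i, Complex.exp (2 * Real.pi * Complex.I * ((w i * (k i : ℝ) : ℝ) : ℂ))) =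
      fun v : Fin d → ℝ => ∏ i, Set.indicator (Set.Icc (-(1/2) : ℝ) (1/2))
        (fun y => Complex.exp (2 * Real.pi * Complex.I * ((y * (k i : ℝ) : ℝ) : ℂ))) (v i) :=
    funext fun v => indicator_pi_prod _
      (fun i y => Complex.exp (2 * Real.pi * Complex.I * ((y * (k i : ℝ) : ℝ) : ℂ))) v
  rw [h2]
  simp only [MeasureTheory.volume_pi]
  rw [MeasureTheory.integral_fintype_prod_eq_prod (ι := Fin d)
    (f := fun i x => Set.indicator (Set.Icc (-(1/2):ℝ) (1/2))
      (fun y => Complex.exp (2 * Real.pi * Complex.I * ((y * (k i : ℝ) : ℝ) : ℂ))) x)]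
  simp_rw [MeasureTheory.integral_indicator measurableSet_Icc, integral_exp_int]
  by_cases hk : k = 0
  · simp [hk]
  · rw [if_neg hk]
    obtain ⟨i, hi⟩ : ∃ i, k i ≠ 0 := by
      by_contra h; push_neg at h; exact hk (funext h)
    exact Finset.prod_eq_zero (Finset.mem_univ i) (by rw [if_neg hi])

end FourierInversionAux

/-- Fourier inversion formula:
`μ_n(γ) = ∫_{[−1/2,1/2]^m} (ℒ_v^n 1_{x_γ})(id) e^{−2πi⟨v,Φ(γ)⟩} dv`. -/
theorem fourier_inversion
    {Γ : Type*} [Group Γ] [Countable Γ] {Λ : Subgroup Γ} (hN : Λ.Normal)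
    (hI : Λ.index ≠ 0) {m : ℕ} (hm : 1 ≤ m) (ψ : Λ ≃* Multiplicative (Fin m → ℤ))
    (R : RepSystem Λ) (μ : Γ → ℝ) (hμ : IsProb μ) (n : ℕ) (γ : Γ) :
    (convPow μ n γ : ℂ) =
      ∫ v in Set.univ.pi (fun _ : Fin m => Set.Icc (-(1/2) : ℝ) (1/2)),
        (transferOp ψ R μ v)^[n] (fun y => if y = R.rep γ then 1 else 0) 1 *
          Complex.exp (-(2 * Real.pi * Complex.I *
            ((∑ i, v i * (Phi ψ R γ i : ℝ)) : ℝ))) := by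
  classical
  have hμn : IsProb (convPow μ n) := isProb_convPow hμ n
  have hrep1 : R.rep 1 = 1 := R.rep_idem 1 R.one_mem
  set f : Γ → ℂ := fun y => if y = R.rep γ then 1 else 0 with hfdef
  have hf : ∀ y, ‖f y‖ ≤ 1 := by
    intro y
    simp only [hfdef]
    split <;> simp
  set cube : Set (Fin m → ℝ) := Set.univ.pi (fun _ : Fin m => Set.Icc (-(1/2) : ℝ) (1/2))
    with hcubedef
  have hvol : volume cube = 1 := by
    rw [hcubedef, MeasureTheory.volume_pi_pi]
    norm_num [Real.volume_Icc]
  set k : Γ → Fin m → ℤ := fun s i => Phi ψ R s i - Phi ψ R γ i with hkdef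
  set T : Γ → (Fin m → ℝ) → ℂ := fun s v => ((convPow μ n s : ℂ) * f (R.rep s)) *
    Complex.exp (2 * Real.pi * Complex.I * ((∑ i, v i * (k s i : ℝ)) : ℝ)) with hTdef
  have hTnorm : ∀ (s : Γ) (v : Fin m → ℝ), ‖T s v‖ ≤ convPow μ n s := by
    intro s v
    simp only [hTdef]
    rw [norm_mul, norm_mul, norm_exp_two_pi_I, mul_one, Complex.norm_real,
      Real.norm_eq_abs, abs_of_nonneg (hμn.1 s)]
    calc convPow μ n s * ‖f (R.rep s)‖ ≤ convPow μ n s * 1 :=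
        mul_le_mul_of_nonneg_left (hf _) (hμn.1 s)
      _ = _ := mul_one _
  have hbody : ∀ v : Fin m → ℝ,
      (transferOp ψ R μ v)^[n] f 1 *
        Complex.exp (-(2 * Real.pi * Complex.I * ((∑ i, v i * (Phi ψ R γ i : ℝ)) : ℝ))) =
      ∑' s : Γ, T s v := by
    intro v
    rw [transferOp_iter ψ R hμ v n f hf 1 hrep1, ← tsum_mul_right]
    refine tsum_congr fun s => ?_
    simp only [hTdef, one_mul, cocycle_one_left]
    have hexp : Complex.exp (2 * Real.pi * Complex.I *
          ((∑ i, v i * (Phi ψ R s i : ℝ)) : ℝ)) *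
        Complex.exp (-(2 * Real.pi * Complex.I * ((∑ i, v i * (Phi ψ R γ i : ℝ)) : ℝ))) =
        Complex.exp (2 * Real.pi * Complex.I * ((∑ i, v i * (k s i : ℝ)) : ℝ)) := by
      rw [← Complex.exp_add]
      congr 1
      simp only [hkdef]
      push_cast
      simp only [mul_sub, Finset.sum_sub_distrib]
      ring
    calc (convPow μ n s : ℂ) *
          Complex.exp (2 * Real.pi * Complex.I * ((∑ i, v i * (Phi ψ R s i : ℝ)) : ℝ)) *
          f (R.rep s) *
          Complex.exp (-(2 * Real.pi * Complex.I * ((∑ i, v i * (Phi ψ R γ i : ℝ)) : ℝ)))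
        = ((convPow μ n s : ℂ) * f (R.rep s)) *
          (Complex.exp (2 * Real.pi * Complex.I * ((∑ i, v i * (Phi ψ R s i : ℝ)) : ℝ)) *
           Complex.exp (-(2 * Real.pi * Complex.I *
             ((∑ i, v i * (Phi ψ R γ i : ℝ)) : ℝ)))) := by ring
      _ = _ := by rw [hexp]
  have hmeas : ∀ s : Γ, AEStronglyMeasurable (T s) (volume.restrict cube) := by
    intro s
    apply Continuous.aestronglyMeasurable
    simp only [hTdef]
    fun_prop
  have hlint : (∑' s : Γ, ∫⁻ v, ‖T s v‖₊ ∂(volume.restrict cube)) ≠ ⊤ := by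
    have hle : ∀ s : Γ, (∫⁻ v, ‖T s v‖₊ ∂(volume.restrict cube)) ≤
        ENNReal.ofReal (convPow μ n s) := by
      intro s
      calc ∫⁻ v, ‖T s v‖₊ ∂(volume.restrict cube)
          ≤ ∫⁻ _, ENNReal.ofReal (convPow μ n s) ∂(volume.restrict cube) := by
            apply MeasureTheory.lintegral_mono
            intro v
            show (‖T s v‖₊ : ENNReal) ≤ ENNReal.ofReal (convPow μ n s)
            rw [← enorm_eq_nnnorm, ← ofReal_norm]
            exact ENNReal.ofReal_le_ofReal (hTnorm s v)
        _ = ENNReal.ofReal (convPow μ n s) := by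
            rw [MeasureTheory.lintegral_const, MeasureTheory.Measure.restrict_apply_univ, hvol,
              mul_one]
    have h2 : (∑' s : Γ, ∫⁻ v, ‖T s v‖₊ ∂(volume.restrict cube)) ≤
        ∑' s : Γ, ENNReal.ofReal (convPow μ n s) := ENNReal.tsum_le_tsum hle
    have h3 : (∑' s : Γ, ENNReal.ofReal (convPow μ n s)) = ENNReal.ofReal 1 := by
      rw [← ENNReal.ofReal_tsum_of_nonneg hμn.1 hμn.2.summable, hμn.2.tsum_eq]
    exact ne_top_of_le_ne_top (by rw [h3]; exact ENNReal.ofReal_ne_top) h2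
  have hswapInt : (∫ v in cube, ∑' s : Γ, T s v) = ∑' s : Γ, ∫ v in cube, T s v :=
    MeasureTheory.integral_tsum hmeas hlint
  have hint : ∀ s : Γ, (∫ v in cube, T s v) =
      ((convPow μ n s : ℂ) * f (R.rep s)) * (if k s = 0 then 1 else 0) := by
    intro s
    simp only [hTdef]
    rw [MeasureTheory.integral_const_mul, hcubedef, integral_cube (k s)]
  have hsum : (∑' s : Γ, ((convPow μ n s : ℂ) * f (R.rep s)) * (if k s = 0 then 1 else 0)) =
      (convPow μ n γ : ℂ) := by
    rw [tsum_eq_single γ ?_]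
    · have h1 : f (R.rep γ) = 1 := by simp [hfdef]
      have h2 : k γ = 0 := by funext i; simp [hkdef]
      rw [h1, h2]
      simp
    · intro s hs
      by_cases hr : R.rep s = R.rep γ
      · have hk0 : ¬ k s = 0 := by
          intro h0
          apply hs
          apply eq_of_phi_rep ψ R ?_ hr
          funext i
          have h := congrFun h0 i
          simpa [hkdef, sub_eq_zero] using h
        rw [if_neg hk0, mul_zero]
      · have hfz : f (R.rep s) = 0 := by simp [hfdef, hr]
        rw [hfz, mul_zero, zero_mul]
  calc (convPow μ n γ : ℂ)
      = ∑' s : Γ, ((convPow μ n s : ℂ) * f (R.rep s)) * (if k s = 0 then 1 else 0) := hsum.symm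
    _ = ∑' s : Γ, ∫ v in cube, T s v := tsum_congr fun s => (hint s).symm
    _ = ∫ v in cube, ∑' s : Γ, T s v := hswapInt.symm
    _ = ∫ v in cube, (transferOp ψ R μ v)^[n] f 1 *
          Complex.exp (-(2 * Real.pi * Complex.I *
            ((∑ i, v i * (Phi ψ R γ i : ℝ)) : ℝ))) :=
        MeasureTheory.integral_congr_ae (MeasureTheory.ae_of_all _ fun v => (hbody v).symm)


end NSVA
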